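/- Let α > 1 and for β > 0 let ρ(β) be the unique positive real with β·Ψ(ρ(β)·β^α) = 1. Then ρ(β)/β converges, as β → +∞, to (∫₀^∞ exp(−u^{α+1}/(α+1)) du)^{α+1}; equivalently (ρ(β)/β)^{1/(α+1)} → ∫₀^∞ exp(−u^{α+1}/(α+1)) du. In particular, ρ(β) → +∞ as β → +∞, and the function β ↦ ρ(β) attains a minimum: there exists β_c > 0 with ρ_c := ρ(β_c) = inf_{β>0} ρ(β) > 0. -/

import Mathlib

open MeasureTheory Real Filter Set

noncomputable def gfun (α : ℝ) (u : ℝ) : ℝ := ∫ v in (0:ℝ)..u, v ^ α / (1 - v)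

noncomputable def Psi (α : ℝ) (x : ℝ) : ℝ :=
  ∫ u in (0:ℝ)..1, (1 - u)⁻¹ * Real.exp (-x * gfun α u)

section aux
variable {α : ℝ}

lemma continuous_rpow_const (hα : 0 < α) : Continuous fun v : ℝ => v ^ α := by
  rw [continuous_iff_continuousAt]
  intro v
  exact Real.continuousAt_rpow_const v α (Or.inr hα.le)

lemma continuousOn_g_integrand (hα : 0 < α) :
    ContinuousOn (fun v : ℝ => v ^ α / (1 - v)) (Iio 1) := by
  intro v hv
  have h1 : (1 : ℝ) - v ≠ 0 := by simp only [mem_Iio] at hv; intro h; linarith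
  exact (((continuous_rpow_const hα).continuousAt).div
    (by fun_prop) h1).continuousWithinAt

lemma intervalIntegrable_g (hα : 0 < α) {u : ℝ} (hu : u < 1) :
    IntervalIntegrable (fun v : ℝ => v ^ α / (1 - v)) volume 0 u := by
  apply ContinuousOn.intervalIntegrable
  apply (continuousOn_g_integrand hα).mono
  intro x hx
  rcases hx with hx
  simp only [mem_Iio]
  rcases le_total 0 u with h | h
  · have := hx.2; simp [uIcc_of_le h] at hx; linarith [hx.2]
  · simp [uIcc_of_ge h] at hx; linarith [hx.2]

lemma intervalIntegrable_inv_one_sub {u : ℝ} (hu0 : 0 ≤ u) (hu : u < 1) :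
    IntervalIntegrable (fun v : ℝ => (1 - v)⁻¹) volume 0 u := by
  apply ContinuousOn.intervalIntegrable
  intro x hx
  rw [uIcc_of_le hu0] at hx
  have h1 : (1 : ℝ) - x ≠ 0 := by intro h; have := hx.2; linarith
  exact (ContinuousAt.continuousWithinAt (by fun_prop (disch := assumption)))

lemma integral_inv_one_sub {u : ℝ} (hu0 : 0 ≤ u) (hu : u < 1) :
    ∫ v in (0:ℝ)..u, (1 - v)⁻¹ = -Real.log (1 - u) := by
  have := intervalIntegral.integral_comp_sub_left (a := 0) (b := u) (fun x : ℝ => x⁻¹) 1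
  rw [this, integral_inv (by
    rw [uIcc_of_le (by linarith : (1:ℝ) - u ≤ 1 - 0)]
    intro h; have := h.1; linarith)]
  rw [sub_zero, Real.log_div one_ne_zero (by linarith), Real.log_one]
  ring

lemma gfun_lower (hα : 1 < α) {u : ℝ} (hu0 : 0 ≤ u) (hu : u < 1) :
    u ^ (α + 1) / (α + 1) ≤ gfun α u := by
  have key : ∫ v in (0:ℝ)..u, v ^ α ≤ gfun α u := by
    apply intervalIntegral.integral_mono_on hu0
      (intervalIntegral.intervalIntegrable_rpow' (by linarith))
      (intervalIntegrable_g (by linarith) hu)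
    intro v hv
    have hv0 : 0 ≤ v := hv.1
    have h1 : 0 < 1 - v := by have := hv.2; linarith
    have hvp : (0:ℝ) ≤ v ^ α := Real.rpow_nonneg hv0 α
    rw [div_eq_mul_inv]
    nth_rewrite 1 [← mul_one (v ^ α)]
    exact mul_le_mul_of_nonneg_left (by rw [le_inv_comm₀] <;> simp <;> linarith) hvp
  rwa [integral_rpow (Or.inl (by linarith)),
    Real.zero_rpow (by linarith), sub_zero] at key


lemma gfun_upper (hα : 1 < α) {u : ℝ} (hu0 : 0 ≤ u) (hu : u < 1) :
    gfun α u ≤ (1 - u)⁻¹ * (u ^ (α + 1) / (α + 1)) := by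
  have h1u : (0:ℝ) < 1 - u := by linarith
  have key : gfun α u ≤ ∫ v in (0:ℝ)..u, (1 - u)⁻¹ * v ^ α := by
    apply intervalIntegral.integral_mono_on hu0
      (intervalIntegrable_g (by linarith) hu)
      ((intervalIntegral.intervalIntegrable_rpow' (by linarith)).const_mul _)
    intro v hv
    have hv0 : 0 ≤ v := hv.1
    have h1 : 0 < 1 - v := by have := hv.2; linarith
    have hvp : (0:ℝ) ≤ v ^ α := Real.rpow_nonneg hv0 α
    rw [div_eq_mul_inv, mul_comm ((1:ℝ)-u)⁻¹]
    apply mul_le_mul_of_nonneg_left _ hvp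
    apply inv_anti₀ h1u
    linarith [hv.2]
  rwa [intervalIntegral.integral_const_mul, integral_rpow (Or.inl (by linarith)),
    Real.zero_rpow (by linarith), sub_zero] at key

lemma gfun_le_log (hα : 1 < α) {u : ℝ} (hu0 : 0 ≤ u) (hu : u < 1) :
    gfun α u ≤ -Real.log (1 - u) := by
  have key : gfun α u ≤ ∫ v in (0:ℝ)..u, (1 - v)⁻¹ := by
    apply intervalIntegral.integral_mono_on hu0
      (intervalIntegrable_g (by linarith) hu)
      (intervalIntegrable_inv_one_sub hu0 hu)
    intro v hv
    have hv0 : 0 ≤ v := hv.1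
    have h1 : 0 < 1 - v := by have := hv.2; linarith
    rw [div_eq_mul_inv]
    nth_rewrite 2 [← one_mul ((1:ℝ)-v)⁻¹]
    apply mul_le_mul_of_nonneg_right _ (by positivity)
    exact Real.rpow_le_one hv0 (by linarith [hv.2]) (by linarith)
  rwa [integral_inv_one_sub hu0 hu] at key

lemma gfun_ge_log (hα : 1 < α) {u : ℝ} (hu0 : 0 ≤ u) (hu : u < 1) :
    -Real.log (1 - u) - α * u ≤ gfun α u := by
  have key : ∫ v in (0:ℝ)..u, ((1 - v)⁻¹ - α) ≤ gfun α u := by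
    apply intervalIntegral.integral_mono_on hu0
      ((intervalIntegrable_inv_one_sub hu0 hu).sub (intervalIntegrable_const))
      (intervalIntegrable_g (by linarith) hu)
    intro v hv
    have hv0 : 0 ≤ v := hv.1
    have h1 : 0 < 1 - v := by have := hv.2; linarith
    have hbern : 1 + α * (v - 1) ≤ v ^ α := by
      have := one_add_mul_self_le_rpow_one_add (s := v - 1) (by linarith) (p := α) hα.le
      simpa using this
    rw [div_eq_mul_inv, sub_le_iff_le_add]
    have : ((1:ℝ) - v)⁻¹ = (1 - v) * (1-v)⁻¹ * (1-v)⁻¹ - 0 := by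
      field_simp
      ring
    calc (1 - v)⁻¹ = (1 + α * (v-1)) * (1-v)⁻¹ + α := by
          field_simp
          ring
    _ ≤ v ^ α * (1-v)⁻¹ + α := by
        linarith [mul_le_mul_of_nonneg_right hbern (by positivity : (0:ℝ) ≤ (1-v)⁻¹)]
  rw [intervalIntegral.integral_sub (intervalIntegrable_inv_one_sub hu0 hu)
    intervalIntegrable_const, integral_inv_one_sub hu0 hu,
    intervalIntegral.integral_const, smul_eq_mul, sub_zero, mul_comm] at key
  exact key

lemma gfun_continuousOn (hα : 1 < α) {b : ℝ} (hb0 : 0 ≤ b) (hb : b < 1) :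
    ContinuousOn (gfun α) (Icc 0 b) := by
  have := intervalIntegral.continuousOn_primitive_interval
    (f := fun v : ℝ => v ^ α / (1 - v)) (μ := volume) (a := (0:ℝ)) (b := b) ?_
  · rwa [uIcc_of_le hb0] at this
  · rw [uIcc_of_le hb0, ← intervalIntegrable_iff_integrableOn_Icc_of_le hb0]
    exact intervalIntegrable_g (by linarith) hb

lemma gfun_nonneg (hα : 1 < α) {u : ℝ} (hu0 : 0 ≤ u) (hu : u < 1) : 0 ≤ gfun α u := by
  have := gfun_lower hα hu0 hu
  have : (0:ℝ) ≤ u ^ (α+1) / (α+1) := by positivity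
  linarith [gfun_lower hα hu0 hu]


lemma gfun_continuousAt (hα : 1 < α) {u : ℝ} (hu : u ∈ Ioo (0:ℝ) 1) :
    ContinuousAt (gfun α) u := by
  have hb : u < (u+1)/2 := by have := hu.2; linarith
  have hb1 : (u+1)/2 < 1 := by have := hu.2; linarith
  exact (gfun_continuousOn hα (by have := hu.1; linarith) hb1).continuousAt
    (Icc_mem_nhds hu.1 hb)

lemma psi_integrand_measurable (hα : 1 < α) (x : ℝ) :
    AEStronglyMeasurable (fun u : ℝ => (1 - u)⁻¹ * Real.exp (-x * gfun α u))
      (volume.restrict (Ioo (0:ℝ) 1)) := by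
  apply ContinuousOn.aestronglyMeasurable _ measurableSet_Ioo
  intro u hu
  apply ContinuousAt.continuousWithinAt
  have h1 : (1:ℝ) - u ≠ 0 := by have := hu.2; intro h; linarith
  have := gfun_continuousAt hα hu
  fun_prop (disch := assumption)

lemma integrableOn_one_sub_rpow {x : ℝ} (hx : 0 < x) :
    IntegrableOn (fun u : ℝ => (1 - u) ^ (x - 1)) (Ioo (0:ℝ) 1) := by
  rw [← intervalIntegrable_iff_integrableOn_Ioo_of_le zero_le_one]
  have := (intervalIntegral.intervalIntegrable_rpow' (a := 0) (b := 1)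
    (r := x - 1) (by linarith)).comp_sub_left 1
  simpa using this.symm

lemma psi_integrand_le (hα : 1 < α) {x u : ℝ} (hx : 0 < x) (hu : u ∈ Ioo (0:ℝ) 1) :
    (1 - u)⁻¹ * Real.exp (-x * gfun α u) ≤ Real.exp (α * x) * (1 - u) ^ (x - 1) := by
  have h1 : (0:ℝ) < 1 - u := by have := hu.2; linarith
  have hg : -Real.log (1 - u) - α * u ≤ gfun α u := gfun_ge_log hα hu.1.le hu.2
  have hexp : Real.exp (-x * gfun α u) ≤ Real.exp (α * x) * (1 - u) ^ x := by
    rw [Real.rpow_def_of_pos h1, ← Real.exp_add]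
    apply Real.exp_le_exp.2
    have hle : -x * gfun α u ≤ -x * (-Real.log (1 - u) - α * u) := by
      apply mul_le_mul_of_nonpos_left hg (by linarith)
    have hu1 : α * u ≤ α := by nlinarith [hu.2.le, hu.1.le]
    nlinarith [hu.2.le, hu.1.le, hx.le]
  calc (1 - u)⁻¹ * Real.exp (-x * gfun α u)
      ≤ (1 - u)⁻¹ * (Real.exp (α * x) * (1 - u) ^ x) :=
        mul_le_mul_of_nonneg_left hexp (by positivity)
    _ = Real.exp (α * x) * (1 - u) ^ (x - 1) := by
        rw [Real.rpow_sub h1, Real.rpow_one]; field_simp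
        try ring

lemma psi_integrand_integrableOn (hα : 1 < α) {x : ℝ} (hx : 0 < x) :
    IntegrableOn (fun u : ℝ => (1 - u)⁻¹ * Real.exp (-x * gfun α u)) (Ioo (0:ℝ) 1) := by
  apply Integrable.mono ((integrableOn_one_sub_rpow hx).const_mul (Real.exp (α * x)))
    (psi_integrand_measurable hα x)
  rw [ae_restrict_iff' measurableSet_Ioo]
  apply ae_of_all
  intro u hu
  have h1 : (0:ℝ) < 1 - u := by have := hu.2; linarith
  rw [Real.norm_eq_abs, Real.norm_eq_abs, abs_of_nonneg (by positivity),
    abs_of_nonneg (by positivity)]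
  exact psi_integrand_le hα hx hu

lemma Psi_eq_setIntegral (α x : ℝ) :
    Psi α x = ∫ u in Ioo (0:ℝ) 1, (1 - u)⁻¹ * Real.exp (-x * gfun α u) := by
  rw [Psi, intervalIntegral.integral_of_le zero_le_one, integral_Ioc_eq_integral_Ioo]

lemma integral_one_sub_rpow {x : ℝ} (hx : 0 < x) :
    ∫ u in Ioo (0:ℝ) 1, (1 - u) ^ (x - 1) = 1 / x := by
  rw [← integral_Ioc_eq_integral_Ioo, ← intervalIntegral.integral_of_le zero_le_one]
  have := intervalIntegral.integral_comp_sub_left (a := (0:ℝ)) (b := 1)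
    (fun u : ℝ => u ^ (x - 1)) 1
  rw [this]
  norm_num
  rw [integral_rpow (Or.inl (by linarith))]
  rw [Real.one_rpow, Real.zero_rpow (by linarith), sub_add_cancel]
  norm_num

lemma Psi_ge (hα : 1 < α) {x : ℝ} (hx : 0 < x) : 1 / x ≤ Psi α x := by
  rw [Psi_eq_setIntegral, ← integral_one_sub_rpow hx]
  apply setIntegral_mono_on (integrableOn_one_sub_rpow hx)
    (psi_integrand_integrableOn hα hx) measurableSet_Ioo
  intro u hu
  have h1 : (0:ℝ) < 1 - u := by have := hu.2; linarith
  have hg : gfun α u ≤ -Real.log (1 - u) := gfun_le_log hα hu.1.le hu.2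
  have hexp : (1 - u) ^ x ≤ Real.exp (-x * gfun α u) := by
    rw [Real.rpow_def_of_pos h1]
    apply Real.exp_le_exp.2
    nlinarith [hx.le]
  calc (1 - u) ^ (x - 1) = (1 - u)⁻¹ * (1 - u) ^ x := by
        rw [Real.rpow_sub h1, Real.rpow_one]; field_simp
        try ring
    _ ≤ (1 - u)⁻¹ * Real.exp (-x * gfun α u) :=
        mul_le_mul_of_nonneg_left hexp (by positivity)


lemma psi_integrand_continuousOn (hα : 1 < α) (x : ℝ) :
    ContinuousOn (fun u : ℝ => (1 - u)⁻¹ * Real.exp (-x * gfun α u)) (Ioo (0:ℝ) 1) := by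
  intro u hu
  apply ContinuousAt.continuousWithinAt
  have h1 : (1:ℝ) - u ≠ 0 := by have := hu.2; intro h; linarith
  have := gfun_continuousAt hα hu
  fun_prop (disch := assumption)

lemma delta_mul_c (hα : 1 < α) {x : ℝ} (hx : 0 < x) :
    x ^ (-(α+1)⁻¹ : ℝ) * x ^ ((α+1)⁻¹ : ℝ) = 1 := by
  rw [← Real.rpow_add hx, neg_add_cancel, Real.rpow_zero]

lemma delta_rpow (hα : 1 < α) {x : ℝ} (hx : 0 < x) :
    (x ^ (-(α+1)⁻¹ : ℝ)) ^ (α + 1 : ℝ) = x⁻¹ := by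
  rw [← Real.rpow_mul hx.le, neg_mul,
    inv_mul_cancel₀ (by linarith : (α:ℝ) + 1 ≠ 0), Real.rpow_neg_one]

lemma scaled_eq (hα : 1 < α) {x : ℝ} (hx : 0 < x) :
    x ^ ((α+1)⁻¹ : ℝ) * Psi α x
      = ∫ t in Ioo (0:ℝ) (x ^ ((α+1)⁻¹ : ℝ)),
          (1 - x ^ (-(α+1)⁻¹ : ℝ) * t)⁻¹
            * Real.exp (-x * gfun α (x ^ (-(α+1)⁻¹ : ℝ) * t)) := by
  have hδ : (0:ℝ) < x ^ (-(α+1)⁻¹ : ℝ) := Real.rpow_pos_of_pos hx _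
  have hinv : (x ^ (-(α+1)⁻¹ : ℝ))⁻¹ = x ^ ((α+1)⁻¹ : ℝ) := by
    rw [Real.rpow_neg hx.le, inv_inv]
  have key := intervalIntegral.smul_integral_comp_mul_left
    (a := (0:ℝ)) (b := (x ^ (-(α+1)⁻¹ : ℝ))⁻¹)
    (f := fun u => (1 - u)⁻¹ * Real.exp (-x * gfun α u)) (x ^ (-(α+1)⁻¹ : ℝ))
  rw [mul_zero, mul_inv_cancel₀ (ne_of_gt hδ)] at key
  have h2 : Psi α x = x ^ (-(α+1)⁻¹ : ℝ) * ∫ t in (0:ℝ)..(x ^ ((α+1)⁻¹ : ℝ)),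
      (1 - x ^ (-(α+1)⁻¹ : ℝ) * t)⁻¹
        * Real.exp (-x * gfun α (x ^ (-(α+1)⁻¹ : ℝ) * t)) := by
    rw [Psi, ← key, smul_eq_mul, hinv]
  rw [h2, ← mul_assoc, ← Real.rpow_add hx, add_neg_cancel, Real.rpow_zero, one_mul,
    intervalIntegral.integral_of_le (by positivity), integral_Ioc_eq_integral_Ioo]

lemma scaled_eq' (hα : 1 < α) {x : ℝ} (hx : 0 < x) :
    x ^ ((α+1)⁻¹ : ℝ) * Psi α x
      = ∫ t in Ioi (0:ℝ), (Ioo (0:ℝ) (x ^ ((α+1)⁻¹ : ℝ))).indicator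
          (fun t => (1 - x ^ (-(α+1)⁻¹ : ℝ) * t)⁻¹
            * Real.exp (-x * gfun α (x ^ (-(α+1)⁻¹ : ℝ) * t))) t := by
  rw [scaled_eq hα hx, setIntegral_indicator measurableSet_Ioo,
    Set.inter_eq_self_of_subset_right Set.Ioo_subset_Ioi_self]

lemma laplace (hα : 1 < α) :
    Tendsto (fun x : ℝ => x ^ ((α+1)⁻¹ : ℝ) * Psi α x) atTop
      (nhds (∫ t in Ioi (0:ℝ), Real.exp (-(t ^ (α+1) / (α+1))))) := by
  have hp : (0:ℝ) < α + 1 := by linarith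
  have main : Tendsto (fun x : ℝ => ∫ t in Ioi (0:ℝ),
      (Ioo (0:ℝ) (x ^ ((α+1)⁻¹ : ℝ))).indicator
        (fun t => (1 - x ^ (-(α+1)⁻¹ : ℝ) * t)⁻¹
          * Real.exp (-x * gfun α (x ^ (-(α+1)⁻¹ : ℝ) * t))) t) atTop
      (nhds (∫ t in Ioi (0:ℝ), Real.exp (-(t ^ (α+1) / (α+1))))) := by
    apply tendsto_integral_filter_of_dominated_convergence
      (bound := fun t => Real.exp (2*α) * Real.exp (-(1/(2*(α+1))) * t ^ (α+1)))
    · -- measurability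
      filter_upwards [eventually_gt_atTop (0:ℝ)] with x hx
      have hδ : (0:ℝ) < x ^ (-(α+1)⁻¹ : ℝ) := Real.rpow_pos_of_pos hx _
      rw [aestronglyMeasurable_indicator_iff measurableSet_Ioo,
        Measure.restrict_restrict measurableSet_Ioo,
        Set.inter_eq_self_of_subset_left Set.Ioo_subset_Ioi_self]
      apply ContinuousOn.aestronglyMeasurable _ measurableSet_Ioo
      apply (psi_integrand_continuousOn hα x).comp
        ((continuous_const.mul continuous_id).continuousOn)
      intro t ht
      constructor
      · exact mul_pos hδ ht.1
      · have := mul_lt_mul_of_pos_left ht.2 hδ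
        rwa [delta_mul_c hα hx] at this
    · -- bound
      filter_upwards [eventually_ge_atTop (4:ℝ)] with x hx4
      have hx : (0:ℝ) < x := by linarith
      have hδ : (0:ℝ) < x ^ (-(α+1)⁻¹ : ℝ) := Real.rpow_pos_of_pos hx _
      rw [ae_restrict_iff' measurableSet_Ioi]
      apply ae_of_all
      intro t ht
      simp only [mem_Ioi] at ht
      by_cases hmem : t ∈ Ioo (0:ℝ) (x ^ ((α+1)⁻¹ : ℝ))
      · rw [indicator_of_mem hmem]
        set u := x ^ (-(α+1)⁻¹ : ℝ) * t with hu
        have hu0 : 0 < u := mul_pos hδ ht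
        have hu1 : u < 1 := by
          have := mul_lt_mul_of_pos_left hmem.2 hδ
          rwa [delta_mul_c hα hx] at this
        have h1u : (0:ℝ) < 1 - u := by linarith
        have hgn : 0 ≤ gfun α u := gfun_nonneg hα hu0.le hu1
        rw [Real.norm_eq_abs, abs_of_nonneg (by positivity)]
        have hg1 : u ^ (α+1) / (α+1) ≤ gfun α u := gfun_lower hα hu0.le hu1
        have hg2 : -Real.log (1 - u) - α ≤ gfun α u := by
          have := gfun_ge_log hα hu0.le hu1
          nlinarith [hu1.le, hu0.le]
        have hup : u ^ (α+1) = t ^ (α+1) / x := by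
          rw [hu, Real.mul_rpow hδ.le ht.le, delta_rpow hα hx]
          ring
        have e2 : Real.exp (-(x-2) * gfun α u)
            ≤ Real.exp (-(1/(2*(α+1))) * t ^ (α+1)) := by
          apply Real.exp_le_exp.2
          calc -(x-2) * gfun α u ≤ -(x-2) * (u ^ (α+1) / (α+1)) := by
                apply mul_le_mul_of_nonpos_left hg1 (by linarith)
          _ = -((x-2)/x) * (t ^ (α+1) / (α+1)) := by
                rw [hup]; field_simp
          _ ≤ -(1/2) * (t ^ (α+1) / (α+1)) := by
                apply mul_le_mul_of_nonneg_right _ (by positivity)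
                have h2x : (1:ℝ)/2 ≤ (x - 2)/x := by
                  rw [div_le_div_iff₀ (by norm_num) hx]; linarith
                linarith
          _ = -(1/(2*(α+1))) * t ^ (α+1) := by field_simp
        have e3 : Real.exp (-2 * gfun α u)
            ≤ Real.exp (2*α) * ((1 - u) * (1 - u)) := by
          have hlog : -2 * gfun α u ≤ 2*α + (Real.log (1-u) + Real.log (1-u)) := by
            nlinarith [hg2]
          calc Real.exp (-2 * gfun α u)
              ≤ Real.exp (2*α + (Real.log (1-u) + Real.log (1-u))) := Real.exp_le_exp.2 hlog
          _ = Real.exp (2*α) * (Real.exp (Real.log (1-u)) * Real.exp (Real.log (1-u))) := by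
                rw [Real.exp_add, Real.exp_add]
          _ = Real.exp (2*α) * ((1 - u) * (1 - u)) := by rw [Real.exp_log h1u]
        have esplit : Real.exp (-x * gfun α u)
            = Real.exp (-(x-2) * gfun α u) * Real.exp (-2 * gfun α u) := by
          rw [← Real.exp_add]; ring_nf
        calc (1 - u)⁻¹ * Real.exp (-x * gfun α u)
            ≤ (1 - u)⁻¹ * (Real.exp (-(1/(2*(α+1))) * t ^ (α+1))
                * (Real.exp (2*α) * ((1 - u) * (1 - u)))) := by
              rw [esplit]
              apply mul_le_mul_of_nonneg_left _ (by positivity)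
              exact mul_le_mul e2 e3 (Real.exp_nonneg _) (Real.exp_nonneg _)
        _ = Real.exp (2*α) * Real.exp (-(1/(2*(α+1))) * t ^ (α+1)) * ((1-u) * ((1-u)⁻¹ * (1-u))) := by
              ring
        _ ≤ Real.exp (2*α) * Real.exp (-(1/(2*(α+1))) * t ^ (α+1)) * 1 := by
              apply mul_le_mul_of_nonneg_left _ (by positivity)
              rw [inv_mul_cancel₀ (ne_of_gt h1u), mul_one]
              linarith
        _ = Real.exp (2*α) * Real.exp (-(1/(2*(α+1))) * t ^ (α+1)) := by ring
      · rw [indicator_of_notMem hmem, norm_zero]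
        positivity
    · -- integrability of bound
      have := integrableOn_rpow_mul_exp_neg_mul_rpow (p := α + 1) (s := 0)
        (b := 1/(2*(α+1))) (by norm_num) (by linarith) (by positivity)
      simp only [Real.rpow_zero, one_mul] at this
      exact (this.const_mul _)
    · -- pointwise convergence
      rw [ae_restrict_iff' measurableSet_Ioi]
      apply ae_of_all
      intro t ht
      simp only [mem_Ioi] at ht
      have htp : (0:ℝ) < t ^ (α+1) / (α+1) := by positivity
      have hδlim : Tendsto (fun x : ℝ => x ^ (-(α+1)⁻¹ : ℝ) * t) atTop (nhds 0) := by
        have := (tendsto_rpow_neg_atTop (y := (α+1)⁻¹) (by positivity)).mul_const t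
        simpa using this
      have hclim : Tendsto (fun x : ℝ => x ^ ((α+1)⁻¹ : ℝ)) atTop atTop :=
        tendsto_rpow_atTop (by positivity)
      have hev : ∀ᶠ x : ℝ in atTop, 0 < x ∧ t < x ^ ((α+1)⁻¹ : ℝ) := by
        filter_upwards [eventually_gt_atTop (0:ℝ), hclim.eventually_gt_atTop t] with x h1 h2
        exact ⟨h1, h2⟩
      have hmem : ∀ᶠ x : ℝ in atTop,
          x ^ (-(α+1)⁻¹ : ℝ) * t ∈ Ioo (0:ℝ) 1 := by
        filter_upwards [hev] with x hx
        have hδ : (0:ℝ) < x ^ (-(α+1)⁻¹ : ℝ) := Real.rpow_pos_of_pos hx.1 _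
        refine ⟨mul_pos hδ ht, ?_⟩
        have := mul_lt_mul_of_pos_left hx.2 hδ
        rwa [delta_mul_c hα hx.1] at this
      have hA : Tendsto (fun x : ℝ => x * gfun α (x ^ (-(α+1)⁻¹ : ℝ) * t)) atTop
          (nhds (t ^ (α+1) / (α+1))) := by
        have hupper : Tendsto
            (fun x : ℝ => (1 - x ^ (-(α+1)⁻¹ : ℝ) * t)⁻¹ * (t ^ (α+1) / (α+1))) atTop
            (nhds (t ^ (α+1) / (α+1))) := by
          have h1 : Tendsto (fun x : ℝ => (1 - x ^ (-(α+1)⁻¹ : ℝ) * t)⁻¹) atTop (nhds 1) := by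
            have := (tendsto_const_nhds (x := (1:ℝ)) (f := atTop (α := ℝ))).sub hδlim
            rw [sub_zero] at this
            have h2 := this.inv₀ one_ne_zero
            rwa [inv_one] at h2
          have := h1.mul_const (t ^ (α+1) / (α+1))
          rwa [one_mul] at this
        apply tendsto_of_tendsto_of_tendsto_of_le_of_le' tendsto_const_nhds hupper
        · filter_upwards [hev, hmem] with x hx hm
          have key := gfun_lower hα hm.1.le hm.2
          have := mul_le_mul_of_nonneg_left key (le_of_lt hx.1)
          calc t ^ (α+1) / (α+1)
              = x * ((x ^ (-(α+1)⁻¹ : ℝ) * t) ^ (α+1) / (α+1)) := by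
                rw [Real.mul_rpow (Real.rpow_pos_of_pos hx.1 _).le ht.le,
                  delta_rpow hα hx.1]
                field_simp [hx.1.ne']
          _ ≤ x * gfun α (x ^ (-(α+1)⁻¹ : ℝ) * t) := this
        · filter_upwards [hev, hmem] with x hx hm
          have key := gfun_upper hα hm.1.le hm.2
          have h2 := mul_le_mul_of_nonneg_left key (le_of_lt hx.1)
          calc x * gfun α (x ^ (-(α+1)⁻¹ : ℝ) * t)
              ≤ x * ((1 - x ^ (-(α+1)⁻¹ : ℝ) * t)⁻¹
                  * ((x ^ (-(α+1)⁻¹ : ℝ) * t) ^ (α+1) / (α+1))) := h2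
          _ = (1 - x ^ (-(α+1)⁻¹ : ℝ) * t)⁻¹ * (t ^ (α+1) / (α+1)) := by
                rw [Real.mul_rpow (Real.rpow_pos_of_pos hx.1 _).le ht.le,
                  delta_rpow hα hx.1]
                rw [mul_comm x, mul_assoc]
                congr 1
                field_simp [hx.1.ne']
      have hglim : Tendsto (fun x : ℝ =>
          (1 - x ^ (-(α+1)⁻¹ : ℝ) * t)⁻¹
            * Real.exp (-x * gfun α (x ^ (-(α+1)⁻¹ : ℝ) * t))) atTop
          (nhds (Real.exp (-(t ^ (α+1) / (α+1))))) := by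
        have h1 : Tendsto (fun x : ℝ => (1 - x ^ (-(α+1)⁻¹ : ℝ) * t)⁻¹) atTop (nhds 1) := by
          have := (tendsto_const_nhds (x := (1:ℝ)) (f := atTop (α := ℝ))).sub hδlim
          rw [sub_zero] at this
          have h2 := this.inv₀ one_ne_zero
          rwa [inv_one] at h2
        have h2 : Tendsto (fun x : ℝ =>
            Real.exp (-x * gfun α (x ^ (-(α+1)⁻¹ : ℝ) * t))) atTop
            (nhds (Real.exp (-(t ^ (α+1) / (α+1))))) := by
          have := (hA.neg).rexp
          simpa [neg_mul] using this
        have := h1.mul h2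
        rwa [one_mul] at this
      apply Tendsto.congr' _ hglim
      filter_upwards [hev] with x hx
      have hmem2 : t ∈ Ioo (0:ℝ) (x ^ ((α+1)⁻¹ : ℝ)) := ⟨ht, hx.2⟩
      rw [Set.indicator_of_mem hmem2]
  apply Tendsto.congr' _ main
  filter_upwards [eventually_gt_atTop (0:ℝ)] with x hx
  exact (scaled_eq' hα hx).symm


lemma I_integrable (hα : 1 < α) :
    IntegrableOn (fun t : ℝ => Real.exp (-(t ^ (α+1) / (α+1)))) (Ioi (0:ℝ)) := by
  have h0 : (fun t : ℝ => Real.exp (-(t ^ (α+1) / (α+1))))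
      = fun t : ℝ => t ^ (0:ℝ) * Real.exp (-(α+1)⁻¹ * t ^ (α+1)) := by
    funext t
    rw [Real.rpow_zero, one_mul]
    congr 1
    rw [div_eq_mul_inv, mul_comm, neg_mul]
  rw [h0]
  exact integrableOn_rpow_mul_exp_neg_mul_rpow (by norm_num) (by linarith) (by positivity)

lemma I_pos (hα : 1 < α) :
    0 < ∫ t in Ioi (0:ℝ), Real.exp (-(t ^ (α+1) / (α+1))) := by
  rw [setIntegral_pos_iff_support_of_nonneg_ae
    (ae_of_all _ (fun t => (Real.exp_pos _).le)) (I_integrable hα)]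
  have : Function.support (fun t : ℝ => Real.exp (-(t ^ (α+1) / (α+1)))) = Set.univ := by
    ext t; simp [Function.mem_support, (Real.exp_pos _).ne']
  rw [this, Set.univ_inter]
  simp

end aux

/-- if, for every `β > 0`, `ρ(β)` is a positive real with
`β Ψ(ρ(β) β^α) = 1`, and `ρ` is continuous on `(0,∞)`, then `ρ(β)/β`
converges, as `β → ∞`, to `(∫₀^∞ exp(-u^{α+1}/(α+1)) du)^{α+1}` (equivalently
`(ρ(β)/β)^{1/(α+1)}` converges to the integral); in particular `ρ(β) → ∞` as
`β → ∞` and `ρ` attains a positive minimum `ρ_c = ρ(β_c)` at some `β_c > 0`. -/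
theorem rho_asymptotics_at_infinity_and_min
    (α : ℝ) (hα : 1 < α) (ρ : ℝ → ℝ)
    (hρ : ∀ β : ℝ, 0 < β → 0 < ρ β ∧ β * Psi α (ρ β * β ^ α) = 1)
    (hρcont : ContinuousOn ρ (Set.Ioi 0)) :
    Tendsto (fun β => ρ β / β) atTop
      (nhds ((∫ u in Set.Ioi (0:ℝ),
        Real.exp (-(u ^ (α + 1) / (α + 1)))) ^ (α + 1))) ∧
    Tendsto (fun β => (ρ β / β) ^ (1 / (α + 1))) atTop
      (nhds (∫ u in Set.Ioi (0:ℝ), Real.exp (-(u ^ (α + 1) / (α + 1))))) ∧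
    Tendsto ρ atTop atTop ∧
    ∃ βc : ℝ, 0 < βc ∧ 0 < ρ βc ∧ ∀ β : ℝ, 0 < β → ρ βc ≤ ρ β := by
  have hp : (0:ℝ) < α + 1 := by linarith
  set I := ∫ u in Set.Ioi (0:ℝ), Real.exp (-(u ^ (α + 1) / (α + 1))) with hIdef
  have hIpos : 0 < I := I_pos hα
  have hx_pos : ∀ β : ℝ, 0 < β → 0 < ρ β * β ^ α := fun β hβ =>
    mul_pos (hρ β hβ).1 (Real.rpow_pos_of_pos hβ α)
  have hPsi_eq : ∀ β : ℝ, 0 < β → Psi α (ρ β * β ^ α) = 1 / β := by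
    intro β hβ
    have h := (hρ β hβ).2
    field_simp
    linarith [h]
  have hx_ge : ∀ β : ℝ, 0 < β → β ≤ ρ β * β ^ α := by
    intro β hβ
    have h1 : 1 / (ρ β * β ^ α) ≤ Psi α (ρ β * β ^ α) := Psi_ge hα (hx_pos β hβ)
    rw [hPsi_eq β hβ] at h1
    rw [div_le_div_iff₀ (hx_pos β hβ) hβ] at h1
    linarith
  have hxto : Tendsto (fun β => ρ β * β ^ α) atTop atTop := by
    apply tendsto_atTop_mono' atTop _ tendsto_id
    filter_upwards [eventually_gt_atTop (0:ℝ)] with β hβ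
    exact hx_ge β hβ
  -- second limit
  have h2 : Tendsto (fun β => (ρ β / β) ^ ((α+1)⁻¹ : ℝ)) atTop (nhds I) := by
    have hcomp := (laplace hα).comp hxto
    apply Tendsto.congr' _ hcomp
    filter_upwards [eventually_gt_atTop (0:ℝ)] with β hβ
    have hρβ := (hρ β hβ).1
    have hxp := hx_pos β hβ
    have hfrac : ρ β / β = (ρ β * β ^ α) * (β ^ ((α+1 : ℝ)))⁻¹ := by
      rw [Real.rpow_add hβ, Real.rpow_one]
      field_simp [(Real.rpow_pos_of_pos hβ α).ne']
    have hβpow : ((β ^ ((α+1:ℝ)))⁻¹ : ℝ) ^ ((α+1)⁻¹ : ℝ) = β⁻¹ := by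
      rw [← Real.rpow_neg hβ.le, ← Real.rpow_mul hβ.le, neg_mul,
        mul_inv_cancel₀ hp.ne', Real.rpow_neg_one]
    calc ((fun x => x ^ ((α+1)⁻¹:ℝ) * Psi α x) ∘ fun β => ρ β * β ^ α) β
        = (ρ β * β ^ α) ^ ((α+1)⁻¹:ℝ) * (1/β) := by
          simp only [Function.comp_apply]
          rw [hPsi_eq β hβ]
    _ = (ρ β / β) ^ ((α+1)⁻¹:ℝ) := by
          rw [hfrac, Real.mul_rpow hxp.le
            (inv_nonneg.mpr (Real.rpow_pos_of_pos hβ _).le), hβpow, one_div]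
  -- first limit
  have h1 : Tendsto (fun β => ρ β / β) atTop (nhds (I ^ ((α+1):ℝ))) := by
    have hpow := h2.rpow_const (p := α+1) (Or.inl hIpos.ne')
    apply Tendsto.congr' _ hpow
    filter_upwards [eventually_gt_atTop (0:ℝ)] with β hβ
    have hρβ := (hρ β hβ).1
    have hq : 0 ≤ ρ β / β := by positivity
    rw [← Real.rpow_mul hq, inv_mul_cancel₀ hp.ne', Real.rpow_one]
  -- third
  have h3 : Tendsto ρ atTop atTop := by
    have hIp : 0 < I ^ ((α+1):ℝ) := Real.rpow_pos_of_pos hIpos _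
    have := Tendsto.pos_mul_atTop hIp h1 tendsto_id
    apply Tendsto.congr' _ this
    filter_upwards [eventually_gt_atTop (0:ℝ)] with β hβ
    simp only [id_eq]
    rw [div_mul_cancel₀ _ hβ.ne']
  -- lower bound for small β
  have hρ_lb : ∀ β : ℝ, 0 < β → β ^ ((1-α):ℝ) ≤ ρ β := by
    intro β hβ
    have h := hx_ge β hβ
    have hβα : (0:ℝ) < β ^ (α:ℝ) := Real.rpow_pos_of_pos hβ α
    have : β ^ ((1-α):ℝ) = β / β ^ (α:ℝ) := by
      rw [Real.rpow_sub hβ, Real.rpow_one]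
    rw [this, div_le_iff₀ hβα]
    linarith
  -- minimum
  have hM : 0 < ρ 1 := (hρ 1 one_pos).1
  obtain ⟨A, hA⟩ := (h3.eventually_ge_atTop (ρ 1)).exists_forall_of_atTop
  set A' := max A 1 with hA'
  set N := max (ρ 1) 1 with hN
  have hN1 : (1:ℝ) ≤ N := le_max_right _ _
  have hN0 : (0:ℝ) < N := by linarith
  set ε := N ^ ((1-α)⁻¹ : ℝ) with hε
  have hεpos : 0 < ε := Real.rpow_pos_of_pos hN0 _
  have hε1 : ε ≤ 1 := Real.rpow_le_one_of_one_le_of_nonpos hN1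
    (by rw [inv_nonpos]; linarith)
  have hεpow : ε ^ ((1-α):ℝ) = N := by
    rw [hε, ← Real.rpow_mul hN0.le, inv_mul_cancel₀ (by linarith : (1:ℝ) - α ≠ 0),
      Real.rpow_one]
  have hsmall : ∀ β : ℝ, 0 < β → β ≤ ε → ρ 1 ≤ ρ β := by
    intro β hβ hβε
    have h1' : ε ^ ((1-α):ℝ) ≤ β ^ ((1-α):ℝ) :=
      Real.rpow_le_rpow_of_nonpos hβ hβε (by linarith)
    have := hρ_lb β hβ
    rw [hεpow] at h1'
    have : ρ 1 ≤ N := le_max_left _ _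
    linarith [hρ_lb β hβ]
  have hIcc : ContinuousOn ρ (Icc ε A') := hρcont.mono (fun y hy => lt_of_lt_of_le hεpos hy.1)
  have hne : (Icc ε A').Nonempty := ⟨1, hε1, le_max_right _ _⟩
  obtain ⟨βc, hβc_mem, hβc_min⟩ := isCompact_Icc.exists_isMinOn hne hIcc
  have hβc_pos : 0 < βc := lt_of_lt_of_le hεpos hβc_mem.1
  refine ⟨?_, ?_, h3, βc, hβc_pos, (hρ βc hβc_pos).1, ?_⟩
  · exact h1
  · have : (fun β => (ρ β / β) ^ (1 / (α + 1))) = fun β => (ρ β / β) ^ ((α+1)⁻¹ : ℝ) := by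
      funext β; rw [one_div]
    rw [this]
    exact h2
  · intro β hβ
    rcases le_or_gt β ε with hc | hc
    · have := hsmall β hβ hc
      have h1mem : (1:ℝ) ∈ Icc ε A' := ⟨hε1, le_max_right _ _⟩
      have := hβc_min h1mem
      simp only [IsMinOn, IsMinFilter] at hβc_min
      have hb1 : ρ βc ≤ ρ 1 := hβc_min h1mem
      linarith [hsmall β hβ hc]
    · rcases le_or_gt β A' with hc2 | hc2
      · exact hβc_min ⟨hc.le, hc2⟩
      · have hβA : A ≤ β := le_trans (le_max_left A 1) hc2.le
        have hb1 : ρ βc ≤ ρ 1 := hβc_min ⟨hε1, le_max_right _ _⟩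
        have := hA β hβA
        linarith
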